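/- Let ω : ℤ → A be a bi-infinite word over a finite alphabet and let S be a reduced forbidding system defining ω (S defines ω and every proper factor of every word in S is a factor of ω). Let u and v be factors of ω of length k+1 such that the length-k suffix of u equals the length-k prefix of v, and suppose the length-(k+2) word w obtained by overlapping u and v along this common part is not a factor of ω. Then w ∈ S. -/

import Mathlib

def IsFactorL {A : Type*} (ω : ℤ → A) (u : List A) : Prop :=
  ∃ i : ℤ, ∀ j : Fin u.length, ω (i + j.1) = u.get j

def IsShift {A : Type*} (ω' ω : ℤ → A) : Prop :=
  ∃ c : ℤ, ω' = fun i => ω (i + c)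

def Defines {A : Type*} (S : Set (List A)) (ω : ℤ → A) : Prop :=
  (∀ s ∈ S, ¬ IsFactorL ω s) ∧
  ∀ ω' : ℤ → A, (∀ s ∈ S, ¬ IsFactorL ω' s) → IsShift ω' ω

/-- `S` is a reduced forbidding system for `ω`. -/
def Reduced {A : Type*} (S : Set (List A)) (ω : ℤ → A) : Prop :=
  (∀ s ∈ S, ¬ IsFactorL ω s) ∧
  ∀ s ∈ S, ∀ t : List A, t <:+: s → t ≠ s → IsFactorL ω t

private lemma getElem_congr_idx' {A : Type*} (l : List A) {a b : ℕ} (hab : a = b)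
    (h : a < l.length) : l[a] = l[b]'(hab ▸ h) := by subst hab; rfl

theorem stmt7 {A : Type*} [Fintype A] (ω : ℤ → A) (S : Set (List A))
    (hdef : Defines S ω) (hred : Reduced S ω)
    (k : ℕ) (u v w : List A)
    (hu : u.length = k + 1) (hv : v.length = k + 1) (hw : w.length = k + 2)
    (hfu : IsFactorL ω u) (hfv : IsFactorL ω v)
    (hwu : w.take (k + 1) = u) (hwv : w.drop 1 = v)
    (hnf : ¬ IsFactorL ω w) :
    w ∈ S := by
  by_contra hns
  obtain ⟨i, hi⟩ := hfu
  obtain ⟨j, hj⟩ := hfv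
  -- getElem versions of the occurrence hypotheses
  have hui : ∀ a : ℕ, ∀ h : a < k + 1, ω (i + a) = u[a]'(by omega) := by
    intro a h
    have := hi ⟨a, by omega⟩
    simpa [List.get_eq_getElem] using this
  have hvj : ∀ a : ℕ, ∀ h : a < k + 1, ω (j + a) = v[a]'(by omega) := by
    intro a h
    have := hj ⟨a, by omega⟩
    simpa [List.get_eq_getElem] using this
  -- relations between u, v and w
  have huw : ∀ a : ℕ, ∀ h : a < k + 1, u[a]'(by omega) = w[a]'(by omega) := by
    intro a h
    exact (List.getElem_of_eq hwu.symm (by omega)).trans (List.getElem_take ..)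
  have hvw : ∀ a : ℕ, ∀ h : a < k + 1, v[a]'(by omega) = w[a + 1]'(by omega) := by
    intro a h
    exact (List.getElem_of_eq hwv.symm (by omega)).trans
      ((List.getElem_drop ..).trans (getElem_congr_idx' w (by omega) (by omega)))
  set c : ℤ := j - i - 1 with hc
  set ω' : ℤ → A := fun n => if n ≤ i + k then ω n else ω (n + c) with hω'
  -- consistency on the overlap
  have hcons : ∀ n : ℤ, i + 1 ≤ n → ω' n = ω (n + c) := by
    intro n hn
    by_cases h : n ≤ i + k
    · simp only [hω', if_pos h]
      obtain ⟨a, h1, h2, hak⟩ : ∃ a : ℕ, n = i + ((a + 1 : ℕ) : ℤ) ∧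
          n + c = j + (a : ℤ) ∧ a + 1 < k + 1 :=
        ⟨(n - i - 1).toNat, by push_cast; omega, by omega, by omega⟩
      rw [h2, hvj a (Nat.lt_of_succ_lt hak), h1, hui (a + 1) hak]
      rw [huw (a + 1) hak, hvw a (Nat.lt_of_succ_lt hak)]
    · simp only [hω', if_neg h]
  -- w occurs in ω' at position i
  have hwocc : ∀ a : ℕ, ∀ h : a < k + 2, ω' (i + a) = w[a]'(by omega) := by
    intro a h
    by_cases h1 : a < k + 1
    · have : (i : ℤ) + a ≤ i + k := by omega
      simp only [hω', if_pos this]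
      rw [hui a h1, huw a h1]
    · have ha : a = k + 1 := by omega
      subst ha
      have : ¬ ((i : ℤ) + (k + 1 : ℕ) ≤ i + k) := by push_cast; omega
      simp only [hω', if_neg this]
      have h2 : (i : ℤ) + ((k + 1 : ℕ) : ℤ) + c = j + (k : ℕ) := by push_cast; omega
      rw [h2, hvj k (by omega), hvw k (by omega)]
  -- ω' avoids S
  have havoid : ∀ s ∈ S, ¬ IsFactorL ω' s := by
    rintro s hs ⟨p, hp⟩
    have hp' : ∀ a : ℕ, ∀ h : a < s.length, ω' (p + a) = s[a]'h := by
      intro a h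
      have := hp ⟨a, h⟩
      simpa [List.get_eq_getElem] using this
    by_cases h1 : p + (s.length : ℤ) ≤ i + k + 1
    · -- entirely in the left part: factor of ω
      refine hdef.1 s hs ⟨p, fun m => ?_⟩
      have hm := hp' m.1 m.2
      have hle : p + (m.1 : ℤ) ≤ i + k := by
        have : (m.1 : ℤ) < s.length := by exact_mod_cast m.2
        omega
      simp only [hω', if_pos hle] at hm
      simpa [List.get_eq_getElem] using hm
    · by_cases h2 : i + 1 ≤ p
      · -- entirely in the right part: factor of ω
        refine hdef.1 s hs ⟨p + c, fun m => ?_⟩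
        have hm := hp' m.1 m.2
        rw [hcons (p + m.1) (by omega)] at hm
        have : p + c + (m.1 : ℤ) = p + m.1 + c := by ring
        rw [List.get_eq_getElem, this, hm]
      · -- s contains w as a factor
        have hpi : p ≤ i := by omega
        have hlen : p + (s.length : ℤ) ≥ i + k + 2 := by omega
        set d : ℕ := (i - p).toNat with hd
        have hdi : (d : ℤ) = i - p := Int.toNat_of_nonneg (by omega)
        have hdlen : d + (k + 2) ≤ s.length := by omega
        have hws : w = (s.drop d).take (k + 2) := by
          apply List.ext_getElem
          · simp [hw]; omega
          · intro a h1' h2'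
            have ha : a < k + 2 := by rwa [hw] at h1'
            have hsa : d + a < s.length := by omega
            rw [List.getElem_take, List.getElem_drop]
            have := hp' (d + a) hsa
            have heq : p + ((d + a : ℕ) : ℤ) = i + a := by push_cast; omega
            rw [heq] at this
            rw [← this, hwocc a ha]
        have hinf : w <:+: s := by
          rw [hws]
          exact ((List.take_prefix _ _).isInfix).trans ((List.drop_suffix _ _).isInfix)
        rcases eq_or_ne w s with heq | hne
        · exact hns (heq ▸ hs)
        · exact hnf (hred.2 s hs w hinf hne)
  -- ω' is a shift of ω, so w is a factor of ω: contradiction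
  obtain ⟨c', hc'⟩ := hdef.2 ω' havoid
  refine hnf ⟨i + c', fun m => ?_⟩
  have := hwocc m.1 (by have := m.2; omega)
  rw [hc'] at this
  simp only at this
  have heq : i + c' + (m.1 : ℤ) = i + m.1 + c' := by ring
  rw [List.get_eq_getElem, heq, this]
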